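/- Let G be a finite simple graph with two vertices s and t at distance k, and let G' be the associated graph on the vertices of shortest (s,t)-paths. Then a set S of vertices of G' is an independent set of G' of size k+1 if and only if S is the vertex set of a shortest (s,t)-path of G; moreover, distinct shortest (s,t)-paths of G have distinct vertex sets, so this correspondence is a bijection between shortest (s,t)-paths in G and independent sets of size k+1 in G'. -/

import Mathlib

/-- The set of vertices of `G` lying on shortest `(s,t)`-paths: those `v` with
`dist(s,v) = i` and `dist(v,t) = k - i` for some `i`, i.e. with
`dist(s,v) + dist(v,t) = k` (reachability is required so that the distances are
meaningful). -/
def OnSP {V : Type*} (G : SimpleGraph V) (s t : V) (k : ℕ) : Set V :=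
  {v | G.Reachable s v ∧ G.Reachable v t ∧ G.dist s v + G.dist v t = k}

/-- For `0 ≤ i ≤ k`, `D_i` is the set of vertices `v` with `dist(s,v) = i` and
`dist(v,t) = k - i`; a vertex of `OnSP G s t k` lies in `D_i` exactly when
`dist(s,v) = i`.  The graph `G'` on `OnSP G s t k`: two distinct vertices are adjacent
iff they lie in the same layer `D_i`, or they lie in consecutive layers `D_i`, `D_{i+1}`
and are non-adjacent in `G`. -/
def Gprime {V : Type*} (G : SimpleGraph V) (s t : V) (k : ℕ) :
    SimpleGraph (OnSP G s t k) :=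
  SimpleGraph.fromRel (fun u v =>
    G.dist s u.val = G.dist s v.val ∨
      (G.dist s u.val + 1 = G.dist s v.val ∧ ¬G.Adj u.val v.val))

/-- `p` is a shortest `(s,t)`-path in `H`, recorded as the sequence of its `L+1` vertices;
its length `L` is required to equal the distance between `s` and `t`. -/
def IsShortestSTPath {V : Type*} (H : SimpleGraph V) (s t : V) (L : ℕ)
    (p : Fin (L + 1) → V) : Prop :=
  p 0 = s ∧ p (Fin.last L) = t ∧ (∀ i : Fin L, H.Adj (p i.castSucc) (p i.succ)) ∧
    L = H.dist s t

/-- `A` is an independent set (of vertices) of the graph `H`. -/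
def IsIndepSet {W : Type*} (H : SimpleGraph W) (A : Set W) : Prop :=
  ∀ u ∈ A, ∀ v ∈ A, ¬H.Adj u v


open SimpleGraph in
lemma reach_dist_triangle {V : Type*} {G : SimpleGraph V} {u v w : V}
    (h1 : G.Reachable u v) (h2 : G.Reachable v w) :
    G.dist u w ≤ G.dist u v + G.dist v w := by
  obtain ⟨p, hp⟩ := h1.exists_walk_length_eq_dist
  obtain ⟨q, hq⟩ := h2.exists_walk_length_eq_dist
  rw [← hp, ← hq, ← SimpleGraph.Walk.length_append]
  exact SimpleGraph.dist_le _

open SimpleGraph in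
lemma sp_layer {V : Type*} {G : SimpleGraph V} {s t : V} {k : ℕ} {p : Fin (k+1) → V}
    (hp : IsShortestSTPath G s t k p) (i : Fin (k+1)) :
    G.Reachable s (p i) ∧ G.Reachable (p i) t ∧
      G.dist s (p i) = i.val ∧ G.dist (p i) t = k - i.val := by
  obtain ⟨h0, hl, hadj, hdk⟩ := hp
  have fwd : ∀ n, ∀ hn : n ≤ k,
      G.Reachable s (p ⟨n, by omega⟩) ∧ G.dist s (p ⟨n, by omega⟩) ≤ n := by
    intro n
    induction n with
    | zero =>
      intro _
      have h0' : p ⟨0, by omega⟩ = s := h0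
      rw [h0']
      exact ⟨Reachable.refl _, by simp [SimpleGraph.dist_self]⟩
    | succ n ih =>
      intro hn
      obtain ⟨hr, hdle⟩ := ih (by omega)
      have hadj' := hadj ⟨n, by omega⟩
      simp only [Fin.castSucc_mk, Fin.succ_mk] at hadj'
      refine ⟨hr.trans hadj'.reachable, ?_⟩
      have htr := reach_dist_triangle hr hadj'.reachable
      have h1 : G.dist (p ⟨n, by omega⟩) (p ⟨n+1, by omega⟩) = 1 :=
        SimpleGraph.dist_eq_one_iff_adj.mpr hadj'
      omega
  have bwd : ∀ n, ∀ hn : n ≤ k,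
      G.Reachable (p ⟨k - n, by omega⟩) t ∧ G.dist (p ⟨k - n, by omega⟩) t ≤ n := by
    intro n
    induction n with
    | zero =>
      intro _
      have hl' : p ⟨k - 0, by omega⟩ = t := hl
      rw [hl']
      exact ⟨Reachable.refl _, by simp [SimpleGraph.dist_self]⟩
    | succ n ih =>
      intro hn
      obtain ⟨hr, hdle⟩ := ih (by omega)
      have hadj' := hadj ⟨k - (n+1), by omega⟩
      simp only [Fin.castSucc_mk, Fin.succ_mk] at hadj'
      have hmk : (⟨k - (n+1) + 1, by omega⟩ : Fin (k+1)) = ⟨k - n, by omega⟩ := by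
        simp only [Fin.mk.injEq]; omega
      rw [hmk] at hadj'
      refine ⟨hadj'.reachable.trans hr, ?_⟩
      have htr := reach_dist_triangle hadj'.reachable hr
      have h1 : G.dist (p ⟨k - (n+1), by omega⟩) (p ⟨k - n, by omega⟩) = 1 :=
        SimpleGraph.dist_eq_one_iff_adj.mpr hadj'
      omega
  have hik : i.val ≤ k := by omega
  have hf := fwd i.val hik
  have hb := bwd (k - i.val) (by omega)
  have hi1 : (⟨i.val, by omega⟩ : Fin (k+1)) = i := Fin.ext rfl
  have hi2 : (⟨k - (k - i.val), by omega⟩ : Fin (k+1)) = i := by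
    apply Fin.ext; simp only [Fin.val_mk]; omega
  rw [hi1] at hf
  rw [hi2] at hb
  have htr := reach_dist_triangle hf.1 hb.1
  exact ⟨hf.1, hb.1, by omega, by omega⟩

/-- a set `S` of vertices of `G'` is an independent set of `G'` of size
`k+1` iff `S` is the vertex set of a shortest `(s,t)`-path of `G`; moreover distinct
shortest `(s,t)`-paths have distinct vertex sets, so this correspondence is a bijection. -/
theorem stmt11 {V : Type*} [Fintype V] (G : SimpleGraph V) (s t : V) (k : ℕ)
    (hr : G.Reachable s t) (hd : G.dist s t = k) :
    (∀ S : Set (OnSP G s t k),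
      (IsIndepSet (Gprime G s t k) S ∧ S.ncard = k + 1) ↔
        ∃ p : Fin (k + 1) → V, IsShortestSTPath G s t k p ∧
          Subtype.val '' S = Set.range p) ∧
    (∀ p q : Fin (k + 1) → V, IsShortestSTPath G s t k p → IsShortestSTPath G s t k q →
      Set.range p = Set.range q → p = q) := by
  classical
  constructor
  · intro S
    constructor
    · rintro ⟨hind, hcard⟩
      have hmem : ∀ u : OnSP G s t k, G.dist s u.val ≤ k := fun u => by
        have := u.2.2.2; omega
      set f : S → Fin (k+1) := fun u => ⟨G.dist s u.1.1, by have := hmem u.1; omega⟩ with hfdef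
      have finj : Function.Injective f := by
        intro u v huv
        by_contra hne
        have hne' : u.1 ≠ v.1 := fun h => hne (Subtype.ext h)
        have hadj : (Gprime G s t k).Adj u.1 v.1 := by
          rw [Gprime, SimpleGraph.fromRel_adj]
          refine ⟨hne', Or.inl (Or.inl ?_)⟩
          have := congrArg Fin.val huv
          simpa [hfdef] using this
        exact hind u.1 u.2 v.1 v.2 hadj
      have hcard' : Nat.card S = Nat.card (Fin (k+1)) := by
        rw [Nat.card_coe_set_eq, hcard, Nat.card_eq_fintype_card, Fintype.card_fin]
      have fbij : Function.Bijective f :=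
        (Nat.bijective_iff_injective_and_card f).mpr ⟨finj, hcard'⟩
      set e := Function.surjInv fbij.2 with hedef
      have hfe : ∀ i, f (e i) = i := fun i => Function.surjInv_eq fbij.2 i
      set p : Fin (k+1) → V := fun i => ((e i).1 : V) with hpdef
      have hdist : ∀ i, G.dist s (p i) = i.val := fun i => congrArg Fin.val (hfe i)
      have honsp : ∀ i, (p i) ∈ OnSP G s t k := fun i => (e i).1.2
      have hsum : ∀ i, G.dist s (p i) + G.dist (p i) t = k := fun i => (honsp i).2.2
      have hreach1 : ∀ i, G.Reachable s (p i) := fun i => (honsp i).1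
      have hreach2 : ∀ i, G.Reachable (p i) t := fun i => (honsp i).2.1
      have hp0 : p 0 = s := by
        have h := hdist 0
        exact ((hreach1 0).dist_eq_zero_iff.mp (by simpa using h)).symm
      have hpl : p (Fin.last k) = t := by
        have h := hdist (Fin.last k)
        have hs := hsum (Fin.last k)
        simp only [Fin.val_last] at h
        have h2 : G.dist (p (Fin.last k)) t = 0 := by omega
        exact (hreach2 _).dist_eq_zero_iff.mp h2
      have hadjp : ∀ i : Fin k, G.Adj (p i.castSucc) (p i.succ) := by
        intro i
        have hd1 : G.dist s (p i.castSucc) = i.val := by simpa using hdist i.castSucc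
        have hd2 : G.dist s (p i.succ) = i.val + 1 := by simpa using hdist i.succ
        have hne : (e i.castSucc).1 ≠ (e i.succ).1 := by
          intro h
          have heq : G.dist s (p i.castSucc) = G.dist s (p i.succ) :=
            congrArg (fun x : OnSP G s t k => G.dist s x.1) h
          omega
        have hnadj := hind (e i.castSucc).1 (e i.castSucc).2 (e i.succ).1 (e i.succ).2
        rw [Gprime, SimpleGraph.fromRel_adj] at hnadj
        push_neg at hnadj
        have h3 := hnadj hne
        exact h3.1.2 (show G.dist s (p i.castSucc) + 1 = G.dist s (p i.succ) from by omega)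
      refine ⟨p, ⟨hp0, hpl, hadjp, hd.symm⟩, ?_⟩
      ext x
      constructor
      · rintro ⟨u, hu, rfl⟩
        refine ⟨f ⟨u, hu⟩, ?_⟩
        have heu : e (f ⟨u, hu⟩) = ⟨u, hu⟩ := finj (hfe _)
        simp only [hpdef, heu]
      · rintro ⟨i, rfl⟩
        exact ⟨(e i).1, (e i).2, rfl⟩
    · rintro ⟨p, hp, hS⟩
      have hlay := fun i => sp_layer hp i
      have pinj : Function.Injective p := by
        intro i j hij
        have hi := (hlay i).2.2.1
        have hj := (hlay j).2.2.1
        apply Fin.ext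
        rw [← hi, ← hj, hij]
      have key : ∀ a b : Fin (k+1), a.val + 1 = b.val → G.Adj (p a) (p b) := by
        intro a b h
        have hak : a.val < k := by omega
        have hadj := hp.2.2.1 ⟨a.val, hak⟩
        have h1 : (⟨a.val, hak⟩ : Fin k).castSucc = a := Fin.ext rfl
        have h2 : (⟨a.val, hak⟩ : Fin k).succ = b := Fin.ext (by simp only [Fin.succ_mk]; omega)
        rwa [h1, h2] at hadj
      constructor
      · intro u hu v hv hadj
        rw [Gprime, SimpleGraph.fromRel_adj] at hadj
        obtain ⟨hne, hrel⟩ := hadj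
        have hu' : (u : V) ∈ Set.range p := by rw [← hS]; exact ⟨u, hu, rfl⟩
        have hv' : (v : V) ∈ Set.range p := by rw [← hS]; exact ⟨v, hv, rfl⟩
        obtain ⟨i, hi⟩ := hu'
        obtain ⟨j, hj⟩ := hv'
        have hdi : G.dist s u.val = i.val := by rw [← hi]; exact (hlay i).2.2.1
        have hdj : G.dist s v.val = j.val := by rw [← hj]; exact (hlay j).2.2.1
        rcases hrel with h | h
        · rcases h with h | ⟨h, hna⟩
          · have hij : i = j := Fin.ext (by omega)
            exact hne (Subtype.ext (by rw [← hi, ← hj, hij]))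
          · exact hna (by rw [← hi, ← hj]; exact key i j (by omega))
        · rcases h with h | ⟨h, hna⟩
          · have hij : i = j := Fin.ext (by omega)
            exact hne (Subtype.ext (by rw [← hi, ← hj, hij]))
          · exact hna (by rw [← hj, ← hi]; exact key j i (by omega))
      · have h1 : (Subtype.val '' S).ncard = S.ncard :=
          Set.ncard_image_of_injective S Subtype.val_injective
        rw [hS] at h1
        rw [← h1, ← Set.image_univ, Set.ncard_image_of_injective _ pinj, Set.ncard_univ,
          Nat.card_eq_fintype_card, Fintype.card_fin]
  · intro p q hp hq hpq
    funext i
    have hqi : q i ∈ Set.range p := by rw [hpq]; exact ⟨i, rfl⟩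
    obtain ⟨j, hj⟩ := hqi
    have h1 : G.dist s (p j) = j.val := (sp_layer hp j).2.2.1
    have h2 : G.dist s (q i) = i.val := (sp_layer hq i).2.2.1
    have hji : j = i := Fin.ext (by rw [← h1, ← h2, hj])
    exact hji ▸ hj
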